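/- For every integer L ≥ 2 and for any set S of explicitly rigidified components in the angle-based bootstrap process on an L×L rotating-squares pattern, if the closure of S under the angle-sum rule is the full set of 2L²−2L+1 components, then |S| ≥ 4L−3. -/
import Mathlib


/-- Components of an `L × L` rotating-squares kirigami pattern, modelled as the cells of
the `(2L−1) × (2L−1)` grid `{0,…,2L−2}²` whose two coordinates have equal parity:
tiles have both coordinates even and holes have both coordinates odd. -/
def IsComp (L : ℕ) (p : ℕ × ℕ) : Prop :=
  p.1 ≤ 2 * L - 2 ∧ p.2 ≤ 2 * L - 2 ∧ p.1 % 2 = p.2 % 2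

/-- A tile: a component with both coordinates even. -/
def IsTile (L : ℕ) (p : ℕ × ℕ) : Prop := IsComp L p ∧ p.1 % 2 = 0

/-- A hole: a component with both coordinates odd. -/
def IsHole (L : ℕ) (p : ℕ × ℕ) : Prop := IsComp L p ∧ p.1 % 2 = 1

/-- Interior nodes of the pattern: mixed-parity grid positions all four of whose
side-neighbours (two tiles and two holes, forming a `2 × 2` block of pairwise diagonally
adjacent cells) lie in the grid. -/
def IsNode (L : ℕ) (c : ℕ × ℕ) : Prop :=
  1 ≤ c.1 ∧ c.1 ≤ 2 * L - 3 ∧ 1 ≤ c.2 ∧ c.2 ≤ 2 * L - 3 ∧ ¬ c.1 % 2 = c.2 % 2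

instance (L : ℕ) : DecidablePred (IsNode L) := fun c => by unfold IsNode; infer_instance

/-- The four components (two tiles and two holes) around the node `c`. -/
def nodeBlock (c : ℕ × ℕ) : Finset (ℕ × ℕ) :=
  {(c.1 - 1, c.2), (c.1 + 1, c.2), (c.1, c.2 - 1), (c.1, c.2 + 1)}

/-- The closure of the set `S` of explicitly rigidified components under the angle-sum
rule: whenever three of the four components around an interior node are rigid, so is the
fourth. -/
inductive AngleRigid (L : ℕ) (S : Set (ℕ × ℕ)) : ℕ × ℕ → Prop
  | expl {p : ℕ × ℕ} : p ∈ S → AngleRigid L S p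
  | node {c p : ℕ × ℕ} : IsNode L c → p ∈ nodeBlock c →
      (∀ q ∈ nodeBlock c, q ≠ p → AngleRigid L S q) → AngleRigid L S p

set_option linter.unreachableTactic false
set_option linter.unusedTactic false
set_option linter.unnecessarySeqFocus false
set_option linter.unusedVariables false

lemma vanish_aux (L : ℕ) (S : Set (ℕ × ℕ)) (g h : ℕ → ℚ)
    (h0 : ∀ p ∈ S, g (p.1 + p.2) + h (p.1 + (2*L-2) - p.2) = 0) :
    ∀ p, AngleRigid L S p → g (p.1 + p.2) + h (p.1 + (2*L-2) - p.2) = 0 := by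
  intro p hp
  induction hp with
  | expl hmem => exact h0 _ hmem
  | @node c p hc hpB hprev ih =>
    obtain ⟨c1, c2⟩ := c
    obtain ⟨n1, n2, n3, n4, n5⟩ := hc
    simp only [nodeBlock] at hpB
    simp only [Finset.mem_insert, Finset.mem_singleton] at hpB
    have hA : ∀ q ∈ nodeBlock (c1, c2), q ≠ p → g (q.1 + q.2) + h (q.1 + (2*L-2) - q.2) = 0 := ih
    simp only at n1 n2 n3 n4 n5
    have hc2 : c2 + 1 ≤ 2*L - 2 := by omega
    rcases hpB with rfl | rfl | rfl | rfl
    · have hB := hA (c1+1, c2) (by simp [nodeBlock]) (by simp [Prod.ext_iff] <;> omega)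
      have hC := hA (c1, c2-1) (by simp [nodeBlock]) (by simp [Prod.ext_iff] <;> omega)
      have hD := hA (c1, c2+1) (by simp [nodeBlock]) (by simp [Prod.ext_iff] <;> omega)
      simp only at hB hC hD ⊢
      have e1 : c1 - 1 + c2 = c1 + (c2 - 1) := by omega
      have e2 : c1 - 1 + (2*L-2) - c2 = c1 + (2*L-2) - (c2+1) := by omega
      have e3 : c1 + 1 + c2 = c1 + (c2+1) := by omega
      have e4 : c1 + 1 + (2*L-2) - c2 = c1 + (2*L-2) - (c2-1) := by omega
      rw [e1, e2]; rw [e3, e4] at hB; linarith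
    · have hB := hA (c1-1, c2) (by simp [nodeBlock]) (by simp [Prod.ext_iff] <;> omega)
      have hC := hA (c1, c2-1) (by simp [nodeBlock]) (by simp [Prod.ext_iff] <;> omega)
      have hD := hA (c1, c2+1) (by simp [nodeBlock]) (by simp [Prod.ext_iff] <;> omega)
      simp only at hB hC hD ⊢
      have e1 : c1 + 1 + c2 = c1 + (c2+1) := by omega
      have e2 : c1 + 1 + (2*L-2) - c2 = c1 + (2*L-2) - (c2-1) := by omega
      have e3 : c1 - 1 + c2 = c1 + (c2-1) := by omega
      have e4 : c1 - 1 + (2*L-2) - c2 = c1 + (2*L-2) - (c2+1) := by omega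
      rw [e1, e2]; rw [e3, e4] at hB; linarith
    · have hB := hA (c1-1, c2) (by simp [nodeBlock]) (by simp [Prod.ext_iff] <;> omega)
      have hC := hA (c1+1, c2) (by simp [nodeBlock]) (by simp [Prod.ext_iff] <;> omega)
      have hD := hA (c1, c2+1) (by simp [nodeBlock]) (by simp [Prod.ext_iff] <;> omega)
      simp only at hB hC hD ⊢
      have e1 : c1 - 1 + c2 = c1 + (c2-1) := by omega
      have e2 : c1 - 1 + (2*L-2) - c2 = c1 + (2*L-2) - (c2+1) := by omega
      have e3 : c1 + 1 + c2 = c1 + (c2+1) := by omega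
      have e4 : c1 + 1 + (2*L-2) - c2 = c1 + (2*L-2) - (c2-1) := by omega
      rw [e1, e2] at hB; rw [e3, e4] at hC; linarith
    · have hB := hA (c1-1, c2) (by simp [nodeBlock]) (by simp [Prod.ext_iff] <;> omega)
      have hC := hA (c1+1, c2) (by simp [nodeBlock]) (by simp [Prod.ext_iff] <;> omega)
      have hD := hA (c1, c2-1) (by simp [nodeBlock]) (by simp [Prod.ext_iff] <;> omega)
      simp only at hB hC hD ⊢
      have e1 : c1 - 1 + c2 = c1 + (c2-1) := by omega
      have e2 : c1 - 1 + (2*L-2) - c2 = c1 + (2*L-2) - (c2+1) := by omega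
      have e3 : c1 + 1 + c2 = c1 + (c2+1) := by omega
      have e4 : c1 + 1 + (2*L-2) - c2 = c1 + (2*L-2) - (c2-1) := by omega
      rw [e1, e2] at hB; rw [e3, e4] at hC; linarith

/-- For every `L ≥ 2`, any set `S` of components of the `L × L` rotating-squares pattern
whose closure under the angle-sum rule is the full set of `2L² − 2L + 1` components
satisfies `|S| ≥ 4L − 3`. -/
theorem angle_lower_bound (L : ℕ) (hL : 2 ≤ L) (S : Finset (ℕ × ℕ))
    (hS : ∀ p ∈ S, IsComp L p)
    (hrigid : ∀ p, IsComp L p → AngleRigid L (↑S) p) :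
    4 * L - 3 ≤ S.card := by
  classical
  set F : (Fin (2*L-1) ⊕ Fin (2*L-2)) → (↥S → ℚ) := fun i p =>
    match i with
    | .inl t => if (p : ℕ × ℕ).1 + (p : ℕ × ℕ).2 = 2*(t:ℕ) then 1 else 0
    | .inr t => if (p : ℕ × ℕ).1 + (2*L-2) - (p : ℕ × ℕ).2 = 2*((t:ℕ)+1) then 1 else 0
    with hF
  have hli : LinearIndependent ℚ F := by
    rw [Fintype.linearIndependent_iff]
    intro c hc
    set g : ℕ → ℚ := fun u => ∑ t : Fin (2*L-1), if u = 2*(t:ℕ) then c (.inl t) else 0 with hg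
    set h : ℕ → ℚ := fun v => ∑ t : Fin (2*L-2), if v = 2*((t:ℕ)+1) then c (.inr t) else 0 with hh
    have hgval : ∀ t : Fin (2*L-1), g (2*(t:ℕ)) = c (.inl t) := by
      intro t
      simp only [hg]
      rw [Finset.sum_eq_single t]
      · simp
      · intro t' _ hne
        have : (t' : ℕ) ≠ (t : ℕ) := fun e => hne (Fin.ext e)
        rw [if_neg (by omega)]
      · intro habs; exact absurd (Finset.mem_univ t) habs
    have hhval : ∀ t : Fin (2*L-2), h (2*((t:ℕ)+1)) = c (.inr t) := by
      intro t
      simp only [hh]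
      rw [Finset.sum_eq_single t]
      · simp
      · intro t' _ hne
        have : (t' : ℕ) ≠ (t : ℕ) := fun e => hne (Fin.ext e)
        rw [if_neg (by omega)]
      · intro habs; exact absurd (Finset.mem_univ t) habs
    have hh0 : h 0 = 0 := by
      simp only [hh]
      apply Finset.sum_eq_zero
      intro t _
      rw [if_neg (by omega)]
    have hzero : ∀ p ∈ (↑S : Set (ℕ × ℕ)), g (p.1 + p.2) + h (p.1 + (2*L-2) - p.2) = 0 := by
      intro p hp
      have := congrFun hc ⟨p, hp⟩
      simp only [Finset.sum_apply, Pi.smul_apply, smul_eq_mul, Pi.zero_apply,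
        Fintype.sum_sum_type, hF, mul_ite, mul_one, mul_zero] at this
      rw [hg, hh]
      simpa using this
    have hall : ∀ p, IsComp L p → g (p.1 + p.2) + h (p.1 + (2*L-2) - p.2) = 0 :=
      fun p hp => vanish_aux L (↑S) g h hzero p (hrigid p hp)
    -- step 1 : c (inl (L-1)) = 0
    have h1 : c (.inl ⟨L-1, by omega⟩) = 0 := by
      have hcomp : IsComp L (0, 2*L-2) := ⟨by omega, by omega, by simp; omega⟩
      have := hall (0, 2*L-2) hcomp
      simp only at this
      have e1 : 0 + (2*L-2) = 2*((⟨L-1, by omega⟩ : Fin (2*L-1)) : ℕ) := by simp; omega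
      have e2 : 0 + (2*L-2) - (2*L-2) = 0 := by omega
      rw [e2, e1, hgval, hh0] at this
      linarith
    -- step 2 : c (inr (L-2)) = 0 and all inl zero
    have h2 : ∀ t : Fin (2*L-1), c (.inl t) + c (.inr ⟨L-2, by omega⟩) = 0 := by
      intro t
      have hcomp : IsComp L ((t:ℕ), (t:ℕ)) := ⟨by omega, by omega, rfl⟩
      have := hall ((t:ℕ), (t:ℕ)) hcomp
      simp only at this
      have e1 : (t:ℕ) + (t:ℕ) = 2*(t:ℕ) := by omega
      have e2 : (t:ℕ) + (2*L-2) - (t:ℕ) = 2*(((⟨L-2, by omega⟩ : Fin (2*L-2)) : ℕ)+1) := by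
        simp; omega
      rw [e1, e2, hgval, hhval] at this
      exact this
    have h2' : c (.inr ⟨L-2, by omega⟩) = 0 := by
      have := h2 ⟨L-1, by omega⟩
      linarith [h1]
    have hinl : ∀ t : Fin (2*L-1), c (.inl t) = 0 := by
      intro t; have := h2 t; linarith [h2']
    have hinr : ∀ t : Fin (2*L-2), c (.inr t) = 0 := by
      intro t
      have ht : (t:ℕ) < 2*L-2 := t.isLt
      have hcomp : IsComp L ((t:ℕ)+1, 2*L-2-((t:ℕ)+1)) := ⟨by omega, by omega, by omega⟩
      have := hall ((t:ℕ)+1, 2*L-2-((t:ℕ)+1)) hcomp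
      simp only at this
      have e1 : (t:ℕ)+1 + (2*L-2-((t:ℕ)+1)) = 2*((⟨L-1, by omega⟩ : Fin (2*L-1)) : ℕ) := by
        simp; omega
      have e2 : (t:ℕ)+1 + (2*L-2) - (2*L-2-((t:ℕ)+1)) = 2*((t:ℕ)+1) := by omega
      rw [e1, e2, hgval, hhval] at this
      rw [h1] at this
      linarith
    intro i
    cases i with
    | inl t => exact hinl t
    | inr t => exact hinr t
  have hcard := hli.fintype_card_le_finrank
  simp only [Fintype.card_sum, Fintype.card_fin] at hcard
  have hfr : Module.finrank ℚ (↥S → ℚ) = S.card := by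
    rw [Module.finrank_fintype_fun_eq_card, Fintype.card_coe]
  omega
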